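/- Let X be a poset, a₀ ∈ X with a₀ ≤ f(a₀), and suppose f satisfies (P2): for all x, y in the image of the transfinite iteration, x ≤ f(x) ≤ y implies f(x) ≤ f(y). If the transfinite iteration sequence a of f from a₀ is well defined, then a is monotone: k ≤ l implies a_k ≤ a_l. -/

import Mathlib

/-- If a₀ ≤ f a₀ and f satisfies Salinas condition (P2) on the image of the
transfinite iteration, then the transfinite iteration sequence is monotone. -/
theorem monotone_iteration_of_P2 {X : Type*} [PartialOrder X]
    (f : X → X) (a₀ : X) (a : Ordinal → X)
    (h0 : a 0 = a₀)
    (hsucc : ∀ k, a (k + 1) = f (a k))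
    (hlim : ∀ l, Order.IsSuccLimit l → IsLUB {x | ∃ k < l, a k = x} (a l))
    (ha₀ : a₀ ≤ f a₀)
    (hP2 : ∀ x y, (∃ k, a k = x) → (∃ k, a k = y) →
      x ≤ f x → f x ≤ y → f x ≤ f y) :
    Monotone a := by
  have key : ∀ l : Ordinal, (a l ≤ f (a l)) ∧ ∀ k < l, a k ≤ a l := by
    intro l
    induction l using Ordinal.induction with
    | h l IH =>
      rcases Ordinal.zero_or_succ_or_isSuccLimit l with rfl | ⟨m, rfl⟩ | hl
      · refine ⟨by rw [h0]; exact ha₀, fun k hk => absurd hk (not_lt_zero (a := k))⟩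
      · simp only [← Ordinal.add_one_eq_succ] at *
        have hm : m < m + 1 := Order.lt_succ m
        obtain ⟨hfm, hmono⟩ := IH m hm
        have hstep : a m ≤ a (m + 1) := by rw [hsucc]; exact hfm
        constructor
        · rw [hsucc]
          exact hP2 (a m) (f (a m)) ⟨m, rfl⟩ ⟨m + 1, hsucc m⟩ hfm le_rfl
        · intro k hk
          rcases lt_or_eq_of_le (Order.lt_succ_iff.mp hk) with h' | rfl
          · exact (hmono k h').trans hstep
          · exact hstep
      · have hub := hlim l hl
        have hle : ∀ k < l, a k ≤ a l := fun k hk => hub.1 ⟨k, hk, rfl⟩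
        refine ⟨?_, hle⟩
        apply hub.2
        rintro x ⟨k, hk, rfl⟩
        have hfk : a k ≤ f (a k) := (IH k hk).1
        have hk1 : k + 1 < l := hl.succ_lt hk
        have : f (a k) ≤ a l := by rw [← hsucc]; exact hle _ hk1
        exact hfk.trans (hP2 (a k) (a l) ⟨k, rfl⟩ ⟨l, rfl⟩ hfk this)
  intro k l hkl
  rcases lt_or_eq_of_le hkl with h | rfl
  · exact (key l).2 k h
  · exact le_rfl
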